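/- arXiv:2509.26194 — 2 statements merged into one kernel-verified Lean document; each statement's English description precedes it below -/
import Mathlib

section
/- Let S ⊆ T ⊆ [n−1]. The set of permutations w ∈ S_n with S ⊆ Des(w) ⊆ T equals the left weak Bruhat interval [w₀(S), w₁(T)]_L, where w₀(S) is the longest element of the parabolic subgroup generated by {s_i : i ∈ S} and w₁(T) is the longest element among minimal length left coset representatives for the parabolic subgroup generated by {s_i : i ∉ T}. -/
open Equiv

/-- The Coxeter length of a permutation of `Fin n`: its number of inversions. -/
def permLen (n : ℕ) (w : Perm (Fin n)) : ℕ :=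
  (Finset.univ.filter (fun p : Fin n × Fin n => p.1 < p.2 ∧ w p.2 < w p.1)).card

/-- The simple transposition `s_i` (0-indexed, swapping positions `i` and `i+1`). -/
def simpleT (n : ℕ) (i : ℕ) (h : i + 1 < n) : Perm (Fin n) :=
  Equiv.swap ⟨i, Nat.lt_of_succ_lt h⟩ ⟨i + 1, h⟩

/-- The (right) descent set of a permutation. -/
def descentSet (n : ℕ) (w : Perm (Fin n)) : Set ℕ :=
  {i | ∃ h : i + 1 < n, permLen n (w * simpleT n i h) < permLen n w}

/-- The parabolic subgroup generated by the simple transpositions `s_i`, `i ∈ S`. -/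
def parabolic (n : ℕ) (S : Set ℕ) : Subgroup (Perm (Fin n)) :=
  Subgroup.closure {g | ∃ i ∈ S, ∃ h : i + 1 < n, g = simpleT n i h}

/-- Left weak Bruhat order: `u ≤_L w` iff `ℓ(w) = ℓ(u) + ℓ(w u⁻¹)`. -/
def leftWeakLe (n : ℕ) (u w : Perm (Fin n)) : Prop :=
  permLen n w = permLen n u + permLen n (w * u⁻¹)

section Aux
open Finset
variable {n : ℕ}

private def Pr (n : ℕ) : Finset (Fin n × Fin n) :=
  Finset.univ.filter (fun p => p.1 < p.2)

private lemma permLen_eq (w : Perm (Fin n)) :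
    permLen n w = ((Pr n).filter (fun p => w p.2 < w p.1)).card := by
  rw [permLen, Pr, Finset.filter_filter]

private lemma cardB (u x : Perm (Fin n)) :
    permLen n x = ((Pr n).filter (fun p =>
      (u p.1 < u p.2 ∧ x (u p.2) < x (u p.1)) ∨ (u p.2 < u p.1 ∧ x (u p.1) < x (u p.2)))).card := by
  classical
  rw [permLen_eq]
  refine Finset.card_nbij'
    (i := fun q => if u⁻¹ q.1 < u⁻¹ q.2 then (u⁻¹ q.1, u⁻¹ q.2) else (u⁻¹ q.2, u⁻¹ q.1))
    (j := fun p => if u p.1 < u p.2 then (u p.1, u p.2) else (u p.2, u p.1)) ?_ ?_ ?_ ?_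
  · rintro ⟨a, b⟩ hq
    simp only [mem_coe, mem_filter, Pr, mem_univ, true_and] at hq ⊢
    obtain ⟨hab, hx⟩ := hq
    have hne : u⁻¹ a ≠ u⁻¹ b := fun h => absurd (u⁻¹.injective h) (ne_of_lt hab)
    rcases lt_or_gt_of_ne hne with h | h
    · simp only [if_pos h]
      exact ⟨h, Or.inl ⟨by simpa using hab, by simpa using hx⟩⟩
    · simp only [if_neg (asymm h)]
      exact ⟨h, Or.inr ⟨by simpa using hab, by simpa using hx⟩⟩
  · rintro ⟨a, b⟩ hp
    simp only [mem_coe, mem_filter, Pr, mem_univ, true_and] at hp ⊢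
    obtain ⟨hab, hB⟩ := hp
    rcases hB with ⟨h1, h2⟩ | ⟨h1, h2⟩
    · simp only [if_pos h1]; exact ⟨h1, h2⟩
    · simp only [if_neg (asymm h1)]; exact ⟨h1, h2⟩
  · rintro ⟨a, b⟩ hq
    simp only [mem_coe, mem_filter, Pr, mem_univ, true_and] at hq
    have hne : u⁻¹ a ≠ u⁻¹ b := fun h => absurd (u⁻¹.injective h) (ne_of_lt hq.1)
    rcases lt_or_gt_of_ne hne with h | h
    · simp only [if_pos h]
      simp [hq.1]
    · simp only [if_neg (asymm h)]
      simp [asymm hq.1, not_lt.2 (le_of_lt hq.1)]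
  · rintro ⟨a, b⟩ hp
    simp only [mem_coe, mem_filter, Pr, mem_univ, true_and] at hp
    rcases hp.2 with ⟨h1, _⟩ | ⟨h1, _⟩
    · simp only [if_pos h1]
      simp [hp.1]
    · simp only [if_neg (asymm h1)]
      simp [asymm hp.1, not_lt.2 (le_of_lt hp.1)]

private lemma master (u x : Perm (Fin n)) :
    permLen n (x * u) + 2 * (((Pr n).filter
      (fun p => u p.2 < u p.1 ∧ x (u p.1) < x (u p.2))).card)
      = permLen n u + permLen n x := by
  classical
  set pU : Fin n × Fin n → Prop := fun p => u p.2 < u p.1 with hpU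
  set pB : Fin n × Fin n → Prop := fun p =>
    (u p.1 < u p.2 ∧ x (u p.2) < x (u p.1)) ∨ (u p.2 < u p.1 ∧ x (u p.1) < x (u p.2)) with hpB
  have key : ∀ p ∈ Pr n,
      ((x * u) p.2 < (x * u) p.1 ↔ ((pU p ∧ ¬ pB p) ∨ (¬ pU p ∧ pB p))) := by
    rintro ⟨a, b⟩ hp
    have hab : a < b := by simpa [Pr] using hp
    have hne : u a ≠ u b := fun h => absurd (u.injective h) (ne_of_lt hab)
    have hxne : x (u a) ≠ x (u b) := fun h => hne (x.injective h)
    simp only [hpU, hpB, Perm.mul_apply]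
    rcases lt_or_gt_of_ne hne with h | h <;> rcases lt_or_gt_of_ne hxne with hx | hx <;>
      simp [h, hx, asymm h, asymm hx, le_of_lt]
  have hW : permLen n (x * u)
      = ((Pr n).filter (fun p => (pU p ∧ ¬ pB p) ∨ (¬ pU p ∧ pB p))).card := by
    rw [permLen_eq]
    exact congrArg card (filter_congr key)
  have hsplit : ((Pr n).filter (fun p => (pU p ∧ ¬ pB p) ∨ (¬ pU p ∧ pB p))).card
      = ((Pr n).filter (fun p => pU p ∧ ¬ pB p)).card
        + ((Pr n).filter (fun p => ¬ pU p ∧ pB p)).card := by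
    rw [filter_or, card_union_of_disjoint]
    rw [Finset.disjoint_left]
    rintro p hp hq
    simp only [mem_filter] at hp hq
    tauto
  have hU : ((Pr n).filter (fun p => pU p ∧ pB p)).card
      + ((Pr n).filter (fun p => pU p ∧ ¬ pB p)).card = permLen n u := by
    rw [permLen_eq]
    rw [← filter_filter, ← filter_filter]
    exact card_filter_add_card_filter_not (s := (Pr n).filter pU) pB
  have hB : ((Pr n).filter (fun p => pB p ∧ pU p)).card
      + ((Pr n).filter (fun p => pB p ∧ ¬ pU p)).card = permLen n x := by
    rw [cardB u x]
    rw [← filter_filter, ← filter_filter]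
    exact card_filter_add_card_filter_not (s := (Pr n).filter pB) pU
  have e1 : ((Pr n).filter (fun p => pB p ∧ pU p)).card
      = ((Pr n).filter (fun p => pU p ∧ pB p)).card := by
    apply congrArg card; apply filter_congr; intro p _; exact and_comm
  have e2 : ((Pr n).filter (fun p => pB p ∧ ¬ pU p)).card
      = ((Pr n).filter (fun p => ¬ pU p ∧ pB p)).card := by
    apply congrArg card; apply filter_congr; intro p _; exact and_comm
  have e3 : ((Pr n).filter (fun p => pU p ∧ x (u p.1) < x (u p.2))).card
      = ((Pr n).filter (fun p => pU p ∧ pB p)).card := by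
    apply congrArg card; apply filter_congr; intro p _
    simp only [hpU, hpB, eq_iff_iff]
    constructor
    · rintro ⟨h1, h2⟩; exact ⟨h1, Or.inr ⟨h1, h2⟩⟩
    · rintro ⟨h1, h2 | h2⟩
      · exact absurd h1 (asymm h2.1)
      · exact ⟨h1, h2.2⟩
  have hmid : ((Pr n).filter (fun p => u p.2 < u p.1 ∧ x (u p.1) < x (u p.2))).card
      = ((Pr n).filter (fun p => pU p ∧ pB p)).card := e3
  omega

private lemma leftWeakLe_iff (u w : Perm (Fin n)) :
    leftWeakLe n u w ↔ ∀ i j : Fin n, i < j → u j < u i → w j < w i := by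
  classical
  have h := master u (w * u⁻¹)
  rw [inv_mul_cancel_right] at h
  have happ : ∀ y : Fin n, (w * u⁻¹) (u y) = w y := by
    intro y; simp [Perm.mul_apply]
  rw [leftWeakLe]
  constructor
  · intro hl i j hij huji
    rw [hl] at h
    have hc : ((Pr n).filter
        (fun p => u p.2 < u p.1 ∧ (w * u⁻¹) (u p.1) < (w * u⁻¹) (u p.2))).card = 0 := by omega
    rw [card_eq_zero, filter_eq_empty_iff] at hc
    have hmem : ((i, j) : Fin n × Fin n) ∈ Pr n := by simp [Pr, hij]
    have := hc hmem
    simp only [happ] at this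
    push_neg at this
    have hwle := this huji
    have hne : w j ≠ w i := fun hh => absurd (w.injective hh) (ne_of_gt hij)
    exact lt_of_le_of_ne hwle hne
  · intro hmono
    have hc : ((Pr n).filter
        (fun p => u p.2 < u p.1 ∧ (w * u⁻¹) (u p.1) < (w * u⁻¹) (u p.2))).card = 0 := by
      rw [card_eq_zero, filter_eq_empty_iff]
      rintro ⟨a, b⟩ hp
      have hab : a < b := by simpa [Pr] using hp
      simp only [happ]
      rintro ⟨h1, h2⟩
      exact absurd (hmono a b hab h1) (asymm h2)
    omega

private lemma simpleT_apply {i : ℕ} (h : i + 1 < n) (x : Fin n) :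
    ((simpleT n i h x : Fin n) : ℕ) = if (x : ℕ) = i then i + 1
      else if (x : ℕ) = i + 1 then i else x := by
  simp only [simpleT, swap_apply_def]
  split_ifs <;> simp_all [Fin.ext_iff]

private lemma simpleT_inv_iff {i : ℕ} (h : i + 1 < n) (p : Fin n × Fin n) (hp : p.1 < p.2) :
    (simpleT n i h p.2 < simpleT n i h p.1) ↔
      p.1 = (⟨i, Nat.lt_of_succ_lt h⟩ : Fin n) ∧ p.2 = (⟨i + 1, h⟩ : Fin n) := by
  obtain ⟨a, b⟩ := p
  have hab : (a : ℕ) < (b : ℕ) := hp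
  rw [Fin.lt_def, simpleT_apply h, simpleT_apply h, Fin.ext_iff, Fin.ext_iff]
  simp only
  split_ifs <;> omega

private lemma permLen_simpleT {i : ℕ} (h : i + 1 < n) : permLen n (simpleT n i h) = 1 := by
  classical
  rw [permLen_eq]
  rw [show ((Pr n).filter (fun p => simpleT n i h p.2 < simpleT n i h p.1))
      = {((⟨i, Nat.lt_of_succ_lt h⟩ : Fin n), (⟨i + 1, h⟩ : Fin n))} from ?_]
  · simp
  · ext ⟨a, b⟩
    simp only [mem_filter, Pr, mem_univ, true_and, mem_singleton, Prod.mk.injEq]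
    constructor
    · rintro ⟨hab, hlt⟩
      exact (simpleT_inv_iff h (a, b) hab).1 hlt
    · rintro ⟨ha, hb⟩
      subst ha; subst hb
      have h1 : ((⟨i, Nat.lt_of_succ_lt h⟩ : Fin n), (⟨i + 1, h⟩ : Fin n)).1
          < ((⟨i, Nat.lt_of_succ_lt h⟩ : Fin n), (⟨i + 1, h⟩ : Fin n)).2 := by
        simp [Fin.lt_def]
      exact ⟨h1, (simpleT_inv_iff h _ h1).2 ⟨rfl, rfl⟩⟩

private lemma permLen_mul_simpleT_asc (w : Perm (Fin n)) {i : ℕ} (h : i + 1 < n)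
    (hw : w ⟨i, Nat.lt_of_succ_lt h⟩ < w ⟨i + 1, h⟩) :
    permLen n (w * simpleT n i h) = permLen n w + 1 := by
  classical
  have hm := master (simpleT n i h) w
  rw [permLen_simpleT] at hm
  have hc : ((Pr n).filter (fun p => simpleT n i h p.2 < simpleT n i h p.1 ∧
      w (simpleT n i h p.1) < w (simpleT n i h p.2))).card = 0 := by
    rw [card_eq_zero, filter_eq_empty_iff]
    rintro ⟨a, b⟩ hp
    have hab : a < b := by simpa [Pr] using hp
    rintro ⟨h1, h2⟩
    obtain ⟨ha, hb⟩ := (simpleT_inv_iff h (a, b) hab).1 h1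
    subst ha; subst hb
    simp only [simpleT, swap_apply_left, swap_apply_right] at h2
    exact absurd hw (asymm h2)
  omega

private lemma descent_iff (w : Perm (Fin n)) (i : ℕ) (h : i + 1 < n) :
    permLen n (w * simpleT n i h) < permLen n w ↔
      w ⟨i + 1, h⟩ < w ⟨i, Nat.lt_of_succ_lt h⟩ := by
  have hne : w ⟨i, Nat.lt_of_succ_lt h⟩ ≠ w ⟨i + 1, h⟩ := by
    intro hh
    have := w.injective hh
    simp [Fin.ext_iff] at this
  rcases lt_or_gt_of_ne hne with hlt | hgt
  · rw [permLen_mul_simpleT_asc w h hlt]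
    constructor
    · intro hx; omega
    · intro hx; exact absurd hx (asymm hlt)
  · have hww : (w * simpleT n i h) ⟨i, Nat.lt_of_succ_lt h⟩
        < (w * simpleT n i h) ⟨i + 1, h⟩ := by
      simp only [Perm.mul_apply, simpleT, swap_apply_left, swap_apply_right]
      exact hgt
    have h2 := permLen_mul_simpleT_asc (w * simpleT n i h) h hww
    rw [mul_assoc, show simpleT n i h * simpleT n i h = 1 from Equiv.swap_mul_self _ _,
      mul_one] at h2
    constructor
    · intro _; exact hgt
    · intro _; omega

private lemma mem_descentSet_iff (w : Perm (Fin n)) (i : ℕ) (h : i + 1 < n) :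
    i ∈ descentSet n w ↔ w ⟨i + 1, h⟩ < w ⟨i, Nat.lt_of_succ_lt h⟩ := by
  constructor
  · rintro ⟨h', hd⟩
    exact (descent_iff w i h).1 hd
  · intro hd
    exact ⟨h, (descent_iff w i h).2 hd⟩

private def SB (S' : Set ℕ) (a b : Fin n) : Prop :=
  ∀ k : ℕ, min (a : ℕ) (b : ℕ) ≤ k → k < max (a : ℕ) (b : ℕ) → k ∈ S'

private def SBlt (S' : Set ℕ) (a b : Fin n) : Prop :=
  ∀ k : ℕ, (a : ℕ) ≤ k → k < (b : ℕ) → k ∈ S'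

private lemma SB_symm {S' : Set ℕ} {a b : Fin n} (h : SB S' a b) : SB S' b a := by
  intro k h1 h2
  exact h k (by omega) (by omega)

private lemma SB_trans {S' : Set ℕ} {a b c : Fin n} (h1 : SB S' a b) (h2 : SB S' b c) :
    SB S' a c := by
  intro k hk1 hk2
  by_cases hb : k < (b : ℕ)
  · by_cases hab : (a : ℕ) ≤ k
    · exact h1 k (by omega) (by omega)
    · exact h2 k (by omega) (by omega)
  · by_cases hcb : k < (c : ℕ)
    · exact h2 k (by omega) (by omega)
    · exact h1 k (by omega) (by omega)

private lemma parabolic_SB {S' : Set ℕ} {w : Perm (Fin n)} (hw : w ∈ parabolic n S') :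
    ∀ x : Fin n, SB S' x (w x) := by
  induction hw using Subgroup.closure_induction with
  | mem g hg =>
    obtain ⟨i, hi, h, rfl⟩ := hg
    intro x k h1 h2
    have hv := simpleT_apply h x
    by_cases hx : (x : ℕ) = i
    · rw [if_pos hx] at hv
      have hk : k = i := by omega
      rw [hk]; exact hi
    · rw [if_neg hx] at hv
      by_cases hx2 : (x : ℕ) = i + 1
      · rw [if_pos hx2] at hv
        have hk : k = i := by omega
        rw [hk]; exact hi
      · rw [if_neg hx2] at hv
        omega
  | one =>
    intro x
    simp only [Perm.one_apply]
    intro k h1 h2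
    omega
  | mul a b _ _ ha hb =>
    intro x
    have h1 := hb x
    have h2 := ha (b x)
    rw [Perm.mul_apply]
    exact SB_trans h1 h2
  | inv a _ ha =>
    intro x
    have := ha (a⁻¹ x)
    rw [show a (a⁻¹ x) = x from by simp] at this
    exact SB_symm this

private lemma chain_lt (w : Perm (Fin n)) (P : ℕ → Prop)
    (hdes : ∀ k (hk : k + 1 < n), P k → w ⟨k + 1, hk⟩ < w ⟨k, Nat.lt_of_succ_lt hk⟩) :
    ∀ i j : Fin n, i < j → (∀ k : ℕ, (i : ℕ) ≤ k → k < (j : ℕ) → P k) → w j < w i := by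
  suffices H : ∀ d : ℕ, ∀ i j : Fin n, (j : ℕ) = (i : ℕ) + d + 1 →
      (∀ k : ℕ, (i : ℕ) ≤ k → k < (j : ℕ) → P k) → w j < w i by
    intro i j hij hall
    exact H ((j : ℕ) - (i : ℕ) - 1) i j (by omega) hall
  intro d
  induction d with
  | zero =>
    intro i j hj hall
    have hk : (i : ℕ) + 1 < n := by have := j.isLt; omega
    have hd := hdes (i : ℕ) hk (hall (i : ℕ) le_rfl (by omega))
    rw [Fin.eta] at hd
    have hji : j = ⟨(i : ℕ) + 1, hk⟩ := by rw [Fin.ext_iff]; simp only [Fin.val_mk]; omega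
    rw [hji]; exact hd
  | succ d ih =>
    intro i j hj hall
    have hm : (i : ℕ) + 1 < n := by have := j.isLt; omega
    have h1 : w ⟨(i : ℕ) + 1, hm⟩ < w i := by
      have hd := hdes (i : ℕ) hm (hall (i : ℕ) le_rfl (by omega))
      rwa [Fin.eta] at hd
    have h2 : w j < w ⟨(i : ℕ) + 1, hm⟩ := by
      refine ih ⟨(i : ℕ) + 1, hm⟩ j (by simp; omega) ?_
      intro k hk1 hk2
      exact hall k (by simp at hk1; omega) hk2
    exact h2.trans h1

private lemma chain_gt (w : Perm (Fin n)) (P : ℕ → Prop)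
    (hasc : ∀ k (hk : k + 1 < n), P k → w ⟨k, Nat.lt_of_succ_lt hk⟩ < w ⟨k + 1, hk⟩) :
    ∀ i j : Fin n, i < j → (∀ k : ℕ, (i : ℕ) ≤ k → k < (j : ℕ) → P k) → w i < w j := by
  suffices H : ∀ d : ℕ, ∀ i j : Fin n, (j : ℕ) = (i : ℕ) + d + 1 →
      (∀ k : ℕ, (i : ℕ) ≤ k → k < (j : ℕ) → P k) → w i < w j by
    intro i j hij hall
    exact H ((j : ℕ) - (i : ℕ) - 1) i j (by omega) hall
  intro d
  induction d with
  | zero =>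
    intro i j hj hall
    have hk : (i : ℕ) + 1 < n := by have := j.isLt; omega
    have hd := hasc (i : ℕ) hk (hall (i : ℕ) le_rfl (by omega))
    rw [Fin.eta] at hd
    have hji : j = ⟨(i : ℕ) + 1, hk⟩ := by rw [Fin.ext_iff]; simp only [Fin.val_mk]; omega
    rw [hji]; exact hd
  | succ d ih =>
    intro i j hj hall
    have hm : (i : ℕ) + 1 < n := by have := j.isLt; omega
    have h1 : w i < w ⟨(i : ℕ) + 1, hm⟩ := by
      have hd := hasc (i : ℕ) hm (hall (i : ℕ) le_rfl (by omega))
      rwa [Fin.eta] at hd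
    have h2 : w ⟨(i : ℕ) + 1, hm⟩ < w j := by
      refine ih ⟨(i : ℕ) + 1, hm⟩ j (by simp; omega) ?_
      intro k hk1 hk2
      exact hall k (by simp at hk1; omega) hk2
    exact h1.trans h2

private lemma max_parabolic_inv (S' : Set ℕ) (w : Perm (Fin n)) (hw : w ∈ parabolic n S')
    (hmax : ∀ x ∈ parabolic n S', permLen n x ≤ permLen n w)
    (i j : Fin n) (hij : i < j) : (w j < w i ↔ SBlt S' i j) := by
  constructor
  · intro hinv k hk1 hk2
    by_contra hkS
    have hsb_i := parabolic_SB hw i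
    have hsb_j := parabolic_SB hw j
    have h1 : ((w i : Fin n) : ℕ) ≤ k := by
      by_contra hgt
      exact hkS (hsb_i k (by omega) (by omega))
    have h2 : k < ((w j : Fin n) : ℕ) := by
      by_contra hle
      exact hkS (hsb_j k (by omega) (by omega))
    have h3 : ((w j : Fin n) : ℕ) < ((w i : Fin n) : ℕ) := hinv
    omega
  · intro hsb
    refine chain_lt w (· ∈ S') ?_ i j hij hsb
    intro k hk hkS
    by_contra hdes
    push_neg at hdes
    have hne : w ⟨k, Nat.lt_of_succ_lt hk⟩ ≠ w ⟨k + 1, hk⟩ := by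
      intro hh
      have := w.injective hh
      simp [Fin.ext_iff] at this
    have hlt : w ⟨k, Nat.lt_of_succ_lt hk⟩ < w ⟨k + 1, hk⟩ := lt_of_le_of_ne hdes hne
    have hsmem : simpleT n k hk ∈ parabolic n S' :=
      Subgroup.subset_closure ⟨k, hkS, hk, rfl⟩
    have hmem2 : w * simpleT n k hk ∈ parabolic n S' := mul_mem hw hsmem
    have hle := hmax _ hmem2
    rw [permLen_mul_simpleT_asc w hk hlt] at hle
    omega

private lemma exists_max_parabolic (S' : Set ℕ) :
    ∃ w ∈ parabolic n S', ∀ x ∈ parabolic n S', permLen n x ≤ permLen n w := by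
  classical
  obtain ⟨w, hw, hmax⟩ := Finset.exists_max_image
    (Finset.univ.filter (fun g : Perm (Fin n) => g ∈ parabolic n S')) (permLen n)
    ⟨1, by simp [Subgroup.one_mem]⟩
  exact ⟨w, by simpa using hw, fun x hx => hmax x (by simpa using hx)⟩

end Aux

open Finset in
/-- For `S ⊆ T ⊆ [n−1]`, the set `{w : S ⊆ Des(w) ⊆ T}` is exactly the left weak
Bruhat interval `[w₀(S), w₁(T)]_L`, where `w₀(S)` is the longest element of the
parabolic subgroup generated by `S` and `w₁(T)` is the longest element among the
minimal length coset representatives `{z : Des(z) ⊆ T}`. -/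
theorem descent_class_eq_weak_interval (n : ℕ) (S T : Set ℕ)
    (hS : S ⊆ T) (hT : ∀ i ∈ T, i + 1 < n)
    (w0 : Perm (Fin n)) (hw0 : w0 ∈ parabolic n S)
    (hw0max : ∀ x ∈ parabolic n S, permLen n x ≤ permLen n w0)
    (w1 : Perm (Fin n)) (hw1 : descentSet n w1 ⊆ T)
    (hw1max : ∀ z : Perm (Fin n), descentSet n z ⊆ T → permLen n z ≤ permLen n w1) :
    ∀ w : Perm (Fin n),
      (S ⊆ descentSet n w ∧ descentSet n w ⊆ T) ↔
      (leftWeakLe n w0 w ∧ leftWeakLe n w w1) := by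
  classical
  have hw0inv : ∀ i j : Fin n, i < j → (w0 j < w0 i ↔ SBlt S i j) :=
    max_parabolic_inv S w0 hw0 hw0max
  obtain ⟨r, hr, hrmax⟩ := exists_max_parabolic (n := n) Tᶜ
  have hrinv : ∀ i j : Fin n, i < j → (r j < r i ↔ SBlt Tᶜ i j) :=
    max_parabolic_inv Tᶜ r hr hrmax
  set z : Perm (Fin n) := Fin.revPerm * r with hz
  have hzinv : ∀ i j : Fin n, i < j → (z j < z i ↔ ¬ SBlt Tᶜ i j) := by
    intro i j hij
    have happ : ∀ x : Fin n, z x = Fin.rev (r x) := by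
      intro x; simp [hz, Perm.mul_apply]
    rw [happ, happ, Fin.rev_lt_rev]
    constructor
    · intro hlt hsb; exact absurd ((hrinv i j hij).2 hsb) (asymm hlt)
    · intro hnsb
      have hne : r i ≠ r j := fun hh => absurd (r.injective hh) (ne_of_lt hij)
      rcases lt_or_gt_of_ne hne with h | h
      · exact h
      · exact absurd ((hrinv i j hij).1 h) hnsb
  have hzdes : descentSet n z ⊆ T := by
    intro i hi
    obtain ⟨h, hd⟩ := hi
    have hdlt := (descent_iff z i h).1 hd
    have hij : (⟨i, Nat.lt_of_succ_lt h⟩ : Fin n) < ⟨i + 1, h⟩ := by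
      rw [Fin.mk_lt_mk]; omega
    have hnsb := (hzinv _ _ hij).1 hdlt
    by_contra hiT
    apply hnsb
    intro k hk1 hk2
    have hk1' : i ≤ k := hk1
    have hk2' : k < i + 1 := hk2
    have hki : k = i := by omega
    rw [hki]; exact hiT
  -- length of z
  have hlenz : permLen n z = ((Pr n).filter (fun p => ¬ SBlt Tᶜ p.1 p.2)).card := by
    rw [permLen_eq]
    apply congrArg card
    apply filter_congr
    intro p hp
    have hplt : p.1 < p.2 := by simpa [Pr] using hp
    exact hzinv p.1 p.2 hplt
  have hw1sub : ((Pr n).filter (fun p => w1 p.2 < w1 p.1))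
      ⊆ ((Pr n).filter (fun p => ¬ SBlt Tᶜ p.1 p.2)) := by
    intro p hp
    rw [mem_filter] at hp ⊢
    obtain ⟨hpPr, hinv⟩ := hp
    have hplt : p.1 < p.2 := by simpa [Pr] using hpPr
    refine ⟨hpPr, ?_⟩
    intro hsb
    have : w1 p.1 < w1 p.2 := by
      refine chain_gt w1 (· ∈ Tᶜ) ?_ p.1 p.2 hplt hsb
      intro k hk hkTc
      have hknd : k ∉ descentSet n w1 := fun hmem => hkTc (hw1 hmem)
      rw [mem_descentSet_iff w1 k hk] at hknd
      push_neg at hknd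
      have hne : w1 ⟨k, Nat.lt_of_succ_lt hk⟩ ≠ w1 ⟨k + 1, hk⟩ := by
        intro hh
        have := w1.injective hh
        simp [Fin.ext_iff] at this
      exact lt_of_le_of_ne hknd hne
    exact absurd hinv (asymm this)
  have hcard : ((Pr n).filter (fun p => ¬ SBlt Tᶜ p.1 p.2)).card
      ≤ ((Pr n).filter (fun p => w1 p.2 < w1 p.1)).card := by
    rw [← hlenz, ← permLen_eq]
    exact hw1max z hzdes
  have hEq : ((Pr n).filter (fun p => w1 p.2 < w1 p.1))
      = ((Pr n).filter (fun p => ¬ SBlt Tᶜ p.1 p.2)) :=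
    Finset.eq_of_subset_of_card_le hw1sub hcard
  have hw1inv : ∀ i j : Fin n, i < j → (w1 j < w1 i ↔ ¬ SBlt Tᶜ i j) := by
    intro i j hij
    have hmem : ((i, j) : Fin n × Fin n) ∈ Pr n := by simp [Pr, hij]
    constructor
    · intro hlt
      have h1 : ((i, j) : Fin n × Fin n) ∈ (Pr n).filter (fun p => w1 p.2 < w1 p.1) :=
        mem_filter.2 ⟨hmem, hlt⟩
      rw [hEq, mem_filter] at h1
      exact h1.2
    · intro hnsb
      have h1 : ((i, j) : Fin n × Fin n) ∈ (Pr n).filter (fun p => ¬ SBlt Tᶜ p.1 p.2) :=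
        mem_filter.2 ⟨hmem, hnsb⟩
      rw [← hEq, mem_filter] at h1
      exact h1.2
  -- main equivalence
  intro w
  constructor
  · rintro ⟨h1, h2⟩
    constructor
    · rw [leftWeakLe_iff]
      intro i j hij hinv
      have hsb := (hw0inv i j hij).1 hinv
      refine chain_lt w (· ∈ S) ?_ i j hij hsb
      intro k hk hkS
      exact (mem_descentSet_iff w k hk).1 (h1 hkS)
    · rw [leftWeakLe_iff]
      intro i j hij hinv
      rw [hw1inv i j hij]
      intro hsb
      have hmono : w i < w j := by
        refine chain_gt w (· ∈ Tᶜ) ?_ i j hij hsb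
        intro k hk hkTc
        have hknd : k ∉ descentSet n w := fun hmem => hkTc (h2 hmem)
        rw [mem_descentSet_iff w k hk] at hknd
        push_neg at hknd
        have hne : w ⟨k, Nat.lt_of_succ_lt hk⟩ ≠ w ⟨k + 1, hk⟩ := by
          intro hh
          have := w.injective hh
          simp [Fin.ext_iff] at this
        exact lt_of_le_of_ne hknd hne
      exact absurd hinv (asymm hmono)
  · rintro ⟨h1, h2⟩
    rw [leftWeakLe_iff] at h1 h2
    constructor
    · intro i hiS
      have hk : i + 1 < n := hT i (hS hiS)
      rw [mem_descentSet_iff w i hk]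
      have hij : (⟨i, Nat.lt_of_succ_lt hk⟩ : Fin n) < ⟨i + 1, hk⟩ := by
        rw [Fin.mk_lt_mk]; omega
      refine h1 _ _ hij ?_
      rw [hw0inv _ _ hij]
      intro k hk1 hk2
      have hk1' : i ≤ k := hk1
      have hk2' : k < i + 1 := hk2
      have hki : k = i := by omega
      rw [hki]; exact hiS
    · intro i hiD
      obtain ⟨hk, hd⟩ := hiD
      have hdlt := (descent_iff w i hk).1 hd
      have hij : (⟨i, Nat.lt_of_succ_lt hk⟩ : Fin n) < ⟨i + 1, hk⟩ := by
        rw [Fin.mk_lt_mk]; omega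
      have hw1lt := h2 _ _ hij hdlt
      have hnsb := (hw1inv _ _ hij).1 hw1lt
      by_contra hiT
      apply hnsb
      intro k hk1 hk2
      have hk1' : i ≤ k := hk1
      have hk2' : k < i + 1 := hk2
      have hki : k = i := by omega
      rw [hki]; exact hiT
end

section
/- Let H be a finite-dimensional Frobenius algebra over ℂ with Frobenius functional ε and Nakayama automorphism φ (so ε(ab) = ε(b φ(a)) for all a,b ∈ H). Let e and f be idempotents in H. Then the map Θ : e H φ(f) → (f H e)*, defined by Θ(eh φ(f))(x) = ε(xh) for x ∈ f H e, is a well-defined isomorphism of left eHe-modules, where (fHe)* carries the left eHe-action ((y·δ)(x) = δ(xy)). -/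
/-- The `ℂ`-subspace `aHb = {a·h·b : h ∈ H}` of an algebra `H`. -/
noncomputable def sandwichSubspace {H : Type} [Ring H] [Algebra ℂ H] (a b : H) :
    Submodule ℂ H :=
  LinearMap.range ((LinearMap.mulRight ℂ b).comp (LinearMap.mulLeft ℂ a))

theorem mem_sandwich' {H : Type} [Ring H] [Algebra ℂ H] (a b x : H) :
    x ∈ sandwichSubspace a b ↔ ∃ h : H, a * h * b = x := by
  simp [sandwichSubspace, LinearMap.mem_range]


/-- Let `H` be a finite-dimensional Frobenius `ℂ`-algebra with Frobenius functional
`ε` and Nakayama automorphism `φ` (so `ε(ab) = ε(b·φ(a))`), and let `e`, `f` be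
idempotents.  Then `Θ : eHφ(f) → (fHe)*`, `Θ(e·h·φ(f))(x) = ε(x·h)`, is a
well-defined bijective map of left `eHe`-modules, where `(fHe)*` carries the
action `(y·δ)(x) = δ(x·y)`. -/
theorem frobenius_corner_duality
    (H : Type) [Ring H] [Algebra ℂ H] [FiniteDimensional ℂ H]
    (ε : H →ₗ[ℂ] ℂ) (hnd : ∀ a : H, (∀ b : H, ε (a * b) = 0) → a = 0)
    (φ : H ≃ₐ[ℂ] H) (hNak : ∀ a b : H, ε (a * b) = ε (b * φ a))
    (e f : H) (he : e * e = e) (hf : f * f = f) :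
    ∃ Θ : ↥(sandwichSubspace e (φ f)) →ₗ[ℂ] Module.Dual ℂ ↥(sandwichSubspace f e),
      (∀ (h : H) (u : ↥(sandwichSubspace e (φ f))), (u : H) = e * h * φ f →
        ∀ x : ↥(sandwichSubspace f e), Θ u x = ε ((x : H) * h)) ∧
      Function.Bijective Θ ∧
      (∀ y : H, e * y * e = y →
        ∀ u v : ↥(sandwichSubspace e (φ f)), (v : H) = y * (u : H) →
          ∀ x x' : ↥(sandwichSubspace f e), (x' : H) = (x : H) * y →
            Θ v x = Θ u x') := by
  classical
  -- basic absorption facts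
  have hxfe : ∀ x : H, x ∈ sandwichSubspace f e → f * x = x ∧ x * e = x := by
    intro x hx
    obtain ⟨h, rfl⟩ := (mem_sandwich' f e x).1 hx
    refine ⟨?_, ?_⟩
    · rw [show f * (f * h * e) = (f * f) * h * e by noncomm_ring, hf]
    · rw [show (f * h * e) * e = f * h * (e * e) by noncomm_ring, he]
  have huef : ∀ u : H, u ∈ sandwichSubspace e (φ f) → e * u = u ∧ u * φ f = u := by
    intro u hu
    obtain ⟨h, rfl⟩ := (mem_sandwich' e (φ f) u).1 hu
    refine ⟨?_, ?_⟩
    · rw [show e * (e * h * φ f) = (e * e) * h * φ f by noncomm_ring, he]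
    · rw [show (e * h * φ f) * φ f = e * h * (φ f * φ f) by noncomm_ring, ← map_mul, hf]
  -- the map
  let Θ : ↥(sandwichSubspace e (φ f)) →ₗ[ℂ] Module.Dual ℂ ↥(sandwichSubspace f e) :=
    { toFun := fun u =>
        ε.comp ((LinearMap.mulRight ℂ (u : H)).comp ((sandwichSubspace f e).subtype))
      map_add' := fun u v => by ext x; simp [mul_add]
      map_smul' := fun c u => by ext x; simp [mul_smul_comm] }
  refine ⟨Θ, ?_, ?_, ?_⟩
  · -- formula
    intro h u hu x
    simp only [Θ, LinearMap.coe_mk, AddHom.coe_mk, LinearMap.coe_comp, Function.comp_apply,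
      Submodule.coe_subtype, LinearMap.mulRight_apply]
    rw [hu]
    have hx := hxfe x x.2
    rw [show (x : H) * (e * h * φ f) = ((x : H) * e) * h * φ f by noncomm_ring, hx.2,
      show (x : H) * h * φ f = ((x : H) * h) * φ f by noncomm_ring,
      ← hNak f ((x : H) * h), show f * ((x : H) * h) = (f * (x : H)) * h by noncomm_ring, hx.1]
  · -- bijectivity
    have key : ∀ u : H, u ∈ sandwichSubspace e (φ f) →
        (∀ x : H, x ∈ sandwichSubspace f e → ε (x * u) = 0) → u = 0 := by
      intro u hu h0
      apply hnd
      intro c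
      have hu' := huef u hu
      have e1 : ε (u * c) = ε (φ.symm c * u) := by
        rw [hNak (φ.symm c) u, AlgEquiv.apply_symm_apply]
      have e2 : ε (φ.symm c * u) = ε ((f * φ.symm c * e) * u) := by
        rw [show (f * φ.symm c * e) * u = f * (φ.symm c * (e * u)) by noncomm_ring, hu'.1,
          hNak f (φ.symm c * u), show φ.symm c * u * φ f = φ.symm c * (u * φ f) by noncomm_ring,
          hu'.2]
      rw [e1, e2]
      exact h0 _ ((mem_sandwich' f e _).2 ⟨φ.symm c, rfl⟩)
    have keyx : ∀ x : H, x ∈ sandwichSubspace f e →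
        (∀ u : H, u ∈ sandwichSubspace e (φ f) → ε (x * u) = 0) → x = 0 := by
      intro x hx h0
      apply hnd
      intro b
      have hx' := hxfe x hx
      have : ε (x * b) = ε (x * (e * b * φ f)) := by
        rw [show x * (e * b * φ f) = ((x * e) * b) * φ f by noncomm_ring, hx'.2,
          show x * b * φ f = (x * b) * φ f by noncomm_ring,
          ← hNak f (x * b), show f * (x * b) = (f * x) * b by noncomm_ring, hx'.1]
      rw [this]
      exact h0 _ ((mem_sandwich' e (φ f) _).2 ⟨b, rfl⟩)
    -- injectivity
    have hinj : Function.Injective Θ := by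
      intro u v huv
      have h0 : (u : H) - (v : H) = 0 := by
        apply key _ (sub_mem u.2 v.2)
        intro x hx
        have := congrFun (congrArg (fun g : Module.Dual ℂ ↥(sandwichSubspace f e) =>
          (g : ↥(sandwichSubspace f e) → ℂ)) huv) ⟨x, hx⟩
        simp only [Θ, LinearMap.coe_mk, AddHom.coe_mk, LinearMap.coe_comp, Function.comp_apply,
          Submodule.coe_subtype, LinearMap.mulRight_apply] at this
        rw [mul_sub, map_sub, this, sub_self]
      exact Subtype.ext (sub_eq_zero.mp h0)
    refine ⟨hinj, ?_⟩
    -- surjectivity via finrank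
    let Ψ : ↥(sandwichSubspace f e) →ₗ[ℂ] Module.Dual ℂ ↥(sandwichSubspace e (φ f)) :=
      { toFun := fun x =>
          ε.comp ((LinearMap.mulLeft ℂ (x : H)).comp ((sandwichSubspace e (φ f)).subtype))
        map_add' := fun u v => by ext x; simp [add_mul]
        map_smul' := fun c u => by ext x; simp [smul_mul_assoc] }
    have hΨinj : Function.Injective Ψ := by
      intro x y hxy
      have h0 : (x : H) - (y : H) = 0 := by
        apply keyx _ (sub_mem x.2 y.2)
        intro u hu
        have := congrFun (congrArg (fun g : Module.Dual ℂ ↥(sandwichSubspace e (φ f)) =>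
          (g : ↥(sandwichSubspace e (φ f)) → ℂ)) hxy) ⟨u, hu⟩
        simp only [Ψ, LinearMap.coe_mk, AddHom.coe_mk, LinearMap.coe_comp, Function.comp_apply,
          Submodule.coe_subtype, LinearMap.mulLeft_apply] at this
        rw [sub_mul, map_sub, this, sub_self]
      exact Subtype.ext (sub_eq_zero.mp h0)
    have hle1 : Module.finrank ℂ ↥(sandwichSubspace e (φ f)) ≤
        Module.finrank ℂ ↥(sandwichSubspace f e) := by
      have := LinearMap.finrank_le_finrank_of_injective (f := Θ) hinj
      rwa [Subspace.dual_finrank_eq] at this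
    have hle2 : Module.finrank ℂ ↥(sandwichSubspace f e) ≤
        Module.finrank ℂ ↥(sandwichSubspace e (φ f)) := by
      have := LinearMap.finrank_le_finrank_of_injective hΨinj
      rwa [Subspace.dual_finrank_eq] at this
    have heq : Module.finrank ℂ ↥(sandwichSubspace e (φ f)) =
        Module.finrank ℂ (Module.Dual ℂ ↥(sandwichSubspace f e)) := by
      rw [Subspace.dual_finrank_eq]
      exact le_antisymm hle1 hle2
    exact (LinearMap.injective_iff_surjective_of_finrank_eq_finrank heq).mp hinj
  · -- module map property
    intro y hy u v hv x x' hx'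
    simp only [Θ, LinearMap.coe_mk, AddHom.coe_mk, LinearMap.coe_comp, Function.comp_apply,
      Submodule.coe_subtype, LinearMap.mulRight_apply]
    rw [hv, hx', mul_assoc]
end
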